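/- Problem of moments duality: Let Ω be a Borel measurable space, let φ, f₁, …, f_k : Ω → ℝ be Borel measurable functionals, set f₀ = 1 (the indicator of Ω), f̃ = (f₀, f₁, …, f_k), and for q ∈ ℝᵏ set q̃ = (1, q₁, …, q_k). Let 𝒬_{f̃} = { ∫ f̃(x) dμ(x) : μ a nonnegative Borel measure on Ω for which all components of f̃ are integrable } ⊆ ℝ^{k+1}. If q̃ is an interior point of 𝒬_{f̃}, then sup{ ∫ φ dμ : μ a nonnegative Borel measure on Ω with ∫ f̃ dμ = q̃ and φ integrable } = inf{ Σ_{i=0}^k a_i q̃_i : a ∈ ℝ^{k+1} such that Σ_{i=0}^k a_i f̃_i(x) ≥ φ(x) for all x ∈ Ω }. -/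

import Mathlib

open MeasureTheory
open scoped BigOperators

section Aux

variable {Ω : Type*} [MeasurableSpace Ω]

/-- Integrability of a measurable function w.r.t. a Dirac measure. -/
lemma integrable_dirac_of_measurable {g : Ω → ℝ} (hg : Measurable g) (x : Ω) :
    Integrable g (Measure.dirac x) := by
  refine ⟨hg.aestronglyMeasurable, ?_⟩
  rw [HasFiniteIntegral, lintegral_dirac' x hg.enorm]
  exact ENNReal.coe_lt_top

/-- Integrability and integral w.r.t. a finite nonnegative combination of Dirac measures. -/
lemma dirac_comb {ι : Type*} (t : Finset ι) (c : ι → ℝ) (hc : ∀ j ∈ t, 0 ≤ c j)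
    (x : ι → Ω) (g : Ω → ℝ) (hg : Measurable g) :
    Integrable g (∑ j ∈ t, (ENNReal.ofReal (c j)) • Measure.dirac (x j)) ∧
    (∫ z, g z ∂(∑ j ∈ t, (ENNReal.ofReal (c j)) • Measure.dirac (x j)))
      = ∑ j ∈ t, c j * g (x j) := by
  classical
  induction t using Finset.induction_on with
  | empty => simpa using integrable_zero_measure
  | @insert a t ha ih =>
    have hca : 0 ≤ c a := hc a (Finset.mem_insert_self a t)
    have ih' := ih (fun j hj => hc j (Finset.mem_insert_of_mem hj))
    rw [Finset.sum_insert ha, Finset.sum_insert ha]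
    have h1 : Integrable g ((ENNReal.ofReal (c a)) • Measure.dirac (x a)) :=
      (integrable_dirac_of_measurable hg (x a)).smul_measure ENNReal.ofReal_ne_top
    refine ⟨h1.add_measure ih'.1, ?_⟩
    rw [integral_add_measure h1 ih'.1, integral_smul_measure,
      integral_dirac' g (x a) hg.stronglyMeasurable, ih'.2,
      ENNReal.toReal_ofReal hca, smul_eq_mul]

end Aux

section Sep

open Set

/-- Weak separation of a point from a convex set in a finite-dimensional space. -/
theorem weak_sep {E : Type*} [NormedAddCommGroup E] [NormedSpace ℝ E]
    [FiniteDimensional ℝ E] [Nontrivial E] {C : Set E} (hC : Convex ℝ C) {x : E}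
    (hx : x ∉ C) : ∃ g : E →L[ℝ] ℝ, g ≠ 0 ∧ ∀ y ∈ C, g x ≤ g y := by
  rcases C.eq_empty_or_nonempty with rfl | ⟨y₀, hy₀⟩
  · obtain ⟨v, hv⟩ := exists_ne (0 : E)
    obtain ⟨g, hg1, hg2⟩ := exists_dual_vector ℝ v (norm_ne_zero_iff.mpr hv)
    refine ⟨g, ?_, by simp⟩
    intro h
    rw [h] at hg2
    simp only [ContinuousLinearMap.zero_apply] at hg2
    exact hv (by simpa [eq_comm] using norm_eq_zero.mp hg2.symm)
  by_cases hxcl : x ∈ closure C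
  · by_cases hspan : affineSpan ℝ C = ⊤
    · -- interior C is nonempty
      have hint : (interior C).Nonempty :=
        hC.interior_nonempty_iff_affineSpan_eq_top.mpr hspan
      obtain ⟨z₀, hz₀⟩ := hint
      have hxint : x ∉ interior C := fun h => hx (interior_subset h)
      obtain ⟨f, hf⟩ := geometric_hahn_banach_open_point hC.interior isOpen_interior hxint
      have hfz : f z₀ < f x := hf z₀ hz₀
      refine ⟨-f, ?_, ?_⟩
      · intro h
        have : f = 0 := by simpa [neg_eq_zero] using h
        rw [this] at hfz; simp at hfz
      · intro y hy
        simp only [ContinuousLinearMap.neg_apply, neg_le_neg_iff]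
        by_contra hlt
        push_neg at hlt
        set ε := f y - f x with hε
        have hεpos : 0 < ε := by simp [hε]; linarith
        set D := |f z₀ - f y| + 1 with hD
        have hDpos : 0 < D := by positivity
        set t := min 1 (ε / (2 * D)) with ht
        have ht0 : 0 < t := lt_min one_pos (by positivity)
        have ht1 : t ≤ 1 := min_le_left _ _
        have hmem : t • z₀ + (1 - t) • y ∈ interior C :=
          hC.combo_interior_closure_subset_interior ht0 (by linarith)
            (by ring_nf)
            (Set.add_mem_add (Set.smul_mem_smul_set hz₀)
              (Set.smul_mem_smul_set (subset_closure hy)))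
        have := hf _ hmem
        rw [map_add, _root_.map_smul, _root_.map_smul] at this
        have htD : t * D ≤ ε / 2 := by
          calc t * D ≤ (ε / (2 * D)) * D := by
                apply mul_le_mul_of_nonneg_right (min_le_right _ _) hDpos.le
            _ = ε / 2 := by field_simp
        simp only [smul_eq_mul] at this
        have h2 : f y - f z₀ ≤ D := by
          have h4 : f y - f z₀ ≤ |f z₀ - f y| := by
            rw [abs_sub_comm]; exact le_abs_self _
          simp only [hD]; linarith
        have h3 : t * (f y - f z₀) ≤ t * D := mul_le_mul_of_nonneg_left h2 ht0.le
        nlinarith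
    · -- flat case
      set A := affineSpan ℝ C with hA
      have hAne : (A : Set E).Nonempty := ⟨y₀, subset_affineSpan ℝ C hy₀⟩
      have hdir : A.direction ≠ ⊤ := by
        intro h
        exact hspan ((AffineSubspace.direction_eq_top_iff_of_nonempty hAne).mp h)
      obtain ⟨v, hv⟩ : ∃ v, v ∉ A.direction := by
        by_contra h
        push_neg at h
        exact hdir (Submodule.eq_top_iff'.mpr h)
      obtain ⟨f, u, hfv, hfu⟩ := geometric_hahn_banach_point_closed
        A.direction.convex (A.direction.closed_of_finiteDimensional) hv
      have hu0 : u < 0 := by simpa using hfu 0 (Submodule.zero_mem _)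
      have hf0 : ∀ y ∈ A.direction, f y = 0 := by
        intro y hy
        by_contra hfy
        have := hfu (((u - 1) / f y) • y) (Submodule.smul_mem _ _ hy)
        rw [_root_.map_smul] at this
        simp only [smul_eq_mul] at this
        rw [div_mul_cancel₀ _ hfy] at this
        linarith
      have hfne : f ≠ 0 := by
        intro h; rw [h] at hfv; simp at hfv; linarith
      refine ⟨f, hfne, ?_⟩
      intro y hy
      have hxA : x ∈ (A : Set E) :=
        closure_minimal (subset_affineSpan ℝ C) A.closed_of_finiteDimensional hxcl
      have hyA : y ∈ (A : Set E) := subset_affineSpan ℝ C hy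
      have : y - x ∈ A.direction := by
        simpa using AffineSubspace.vsub_mem_direction hyA hxA
      have := hf0 _ this
      rw [map_sub] at this
      linarith
  · -- x not in closure C: strict separation
    obtain ⟨f, u, hfu, hfx⟩ := geometric_hahn_banach_closed_point
      (hC.closure) isClosed_closure hxcl
    have hfy₀ : f y₀ < f x := lt_trans (hfu y₀ (subset_closure hy₀)) hfx
    refine ⟨-f, ?_, ?_⟩
    · intro h
      have : f = 0 := by simpa [neg_eq_zero] using h
      rw [this] at hfy₀; simp at hfy₀
    · intro y hy
      simp only [ContinuousLinearMap.neg_apply, neg_le_neg_iff]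
      exact le_of_lt (lt_trans (hfu y (subset_closure hy)) hfx)

end Sep

section Cone

variable {Ω : Type*} {m : ℕ}

/-- The convex cone of "finitely supported moment vectors extended with a slack". -/
def MSet (F : Fin m → Ω → ℝ) (φ : Ω → ℝ) : Set ((Fin m → ℝ) × ℝ) :=
  {z | ∃ (n : ℕ) (c : Fin n → ℝ) (x : Fin n → Ω) (s : ℝ),
    (∀ j, 0 ≤ c j) ∧ 0 ≤ s ∧ (∀ i, z.1 i = ∑ j, c j * F i (x j)) ∧
    z.2 = ∑ j, c j * φ (x j) - s}

lemma MSet.zero_mem (F : Fin m → Ω → ℝ) (φ : Ω → ℝ) : (0 : (Fin m → ℝ) × ℝ) ∈ MSet F φ :=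
  ⟨0, Fin.elim0, Fin.elim0, 0, fun j => j.elim0, le_refl 0, fun i => by simp, by simp⟩

lemma MSet.gen_mem (F : Fin m → Ω → ℝ) (φ : Ω → ℝ) (x : Ω) :
    ((fun i => F i x, φ x) : (Fin m → ℝ) × ℝ) ∈ MSet F φ :=
  ⟨1, fun _ => 1, fun _ => x, 0, fun _ => zero_le_one, le_refl 0,
    fun i => by simp, by simp⟩

lemma MSet.down_mem (F : Fin m → Ω → ℝ) (φ : Ω → ℝ) {s : ℝ} (hs : 0 ≤ s) :
    ((0, -s) : (Fin m → ℝ) × ℝ) ∈ MSet F φ :=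
  ⟨0, Fin.elim0, Fin.elim0, s, fun j => j.elim0, hs, fun i => by simp, by simp⟩

lemma MSet.smul_mem (F : Fin m → Ω → ℝ) (φ : Ω → ℝ) {t : ℝ} (ht : 0 ≤ t)
    {z : (Fin m → ℝ) × ℝ} (hz : z ∈ MSet F φ) : t • z ∈ MSet F φ := by
  obtain ⟨n, c, x, s, hc, hs, h1, h2⟩ := hz
  refine ⟨n, fun j => t * c j, x, t * s, fun j => mul_nonneg ht (hc j),
    mul_nonneg ht hs, fun i => ?_, ?_⟩
  · simp only [Prod.smul_fst, Pi.smul_apply, smul_eq_mul, h1 i, Finset.mul_sum]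
    exact Finset.sum_congr rfl fun j _ => by ring
  · simp only [Prod.smul_snd, smul_eq_mul, h2, Finset.mul_sum, mul_sub]
    rw [sub_left_inj]
    exact Finset.sum_congr rfl fun j _ => by ring

lemma MSet.add_mem (F : Fin m → Ω → ℝ) (φ : Ω → ℝ)
    {z w : (Fin m → ℝ) × ℝ} (hz : z ∈ MSet F φ) (hw : w ∈ MSet F φ) :
    z + w ∈ MSet F φ := by
  obtain ⟨n, c, x, s, hc, hs, h1, h2⟩ := hz
  obtain ⟨n', c', x', s', hc', hs', h1', h2'⟩ := hw
  refine ⟨n + n', Fin.append c c', Fin.append x x', s + s', ?_, by linarith,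
    fun i => ?_, ?_⟩
  · intro j
    refine Fin.addCases (fun j => ?_) (fun j => ?_) j
    · simpa using hc j
    · simpa using hc' j
  · simp only [Prod.fst_add, Pi.add_apply, h1 i, h1' i, Fin.sum_univ_add,
      Fin.append_left, Fin.append_right]
  · simp only [Prod.snd_add, h2, h2', Fin.sum_univ_add, Fin.append_left, Fin.append_right]
    ring

lemma MSet.convex (F : Fin m → Ω → ℝ) (φ : Ω → ℝ) : Convex ℝ (MSet F φ) := by
  intro z hz w hw a b ha hb _
  exact MSet.add_mem F φ (MSet.smul_mem F φ ha hz) (MSet.smul_mem F φ hb hw)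

/-- From a point of the cone with given moment vector, build a feasible measure. -/
lemma MSet.exists_measure [MeasurableSpace Ω] {F : Fin m → Ω → ℝ} {φ : Ω → ℝ}
    (hF : ∀ i, Measurable (F i)) (hφ : Measurable φ)
    {z : (Fin m → ℝ) × ℝ} (hz : z ∈ MSet F φ) :
    ∃ μ : Measure Ω, Integrable φ μ ∧ (∀ i, Integrable (F i) μ) ∧
      (∀ i, (∫ x, F i x ∂μ) = z.1 i) ∧ z.2 ≤ ∫ x, φ x ∂μ := by
  obtain ⟨n, c, x, s, hc, hs, h1, h2⟩ := hz
  set μ : Measure Ω := ∑ j ∈ Finset.univ, (ENNReal.ofReal (c j)) • Measure.dirac (x j) with hμ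
  have hcomb := fun (g : Ω → ℝ) (hg : Measurable g) =>
    dirac_comb Finset.univ c (fun j _ => hc j) x g hg
  refine ⟨μ, (hcomb φ hφ).1, fun i => (hcomb (F i) (hF i)).1, fun i => ?_, ?_⟩
  · rw [hμ, (hcomb (F i) (hF i)).2, h1 i]
  · rw [hμ, (hcomb φ hφ).2, h2]
    linarith

/-- Representation of a continuous linear functional on `(Fin m → ℝ) × ℝ`. -/
lemma clm_repr (g : ((Fin m → ℝ) × ℝ) →L[ℝ] ℝ) (v : Fin m → ℝ) (w : ℝ) :
    g (v, w) = ∑ i, v i * g (Pi.single i 1, 0) + w * g (0, 1) := by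
  have hvw : ((v, w) : (Fin m → ℝ) × ℝ)
      = (∑ i, v i • ((Pi.single i 1 : Fin m → ℝ), (0 : ℝ)))
        + w • (((0 : Fin m → ℝ), (1 : ℝ))) := by
    refine Prod.ext ?_ ?_
    · simp only [Prod.fst_add, Prod.fst_sum, Prod.smul_fst, Prod.smul_snd]
      funext j
      simp [Pi.single_apply, Finset.sum_apply, Finset.sum_ite_eq']
    · simp [Prod.snd_sum]
  rw [hvw, map_add, map_sum]
  simp only [ContinuousLinearMap.map_smul, smul_eq_mul]

end Cone

/-- **Problem of moments duality.** -/
theorem stmt_2 {Ω : Type*} [MeasurableSpace Ω] {k : ℕ}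
    (φ : Ω → ℝ) (f : Fin k → Ω → ℝ) (q : Fin k → ℝ)
    (hφ : Measurable φ) (hf : ∀ i, Measurable (f i)) :
    let ft : Fin (k + 1) → Ω → ℝ := Fin.cons (fun _ => 1) f
    let qt : Fin (k + 1) → ℝ := Fin.cons 1 q
    let Qf : Set (Fin (k + 1) → ℝ) :=
      { v | ∃ μ : Measure Ω, (∀ i, Integrable (ft i) μ) ∧
          ∀ i, (∫ x, ft i x ∂μ) = v i }
    qt ∈ interior Qf →
    sSup { y : EReal | ∃ μ : Measure Ω, Integrable φ μ ∧
        (∀ i, Integrable (ft i) μ) ∧ (∀ i, (∫ x, ft i x ∂μ) = qt i) ∧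
        y = ((∫ x, φ x ∂μ : ℝ) : EReal) }
      = sInf { y : EReal | ∃ a : Fin (k + 1) → ℝ,
          (∀ x, φ x ≤ ∑ i, a i * ft i x) ∧
          y = ((∑ i, a i * qt i : ℝ) : EReal) } := by
  intro ft qt Qf hq
  have hft : ∀ i, Measurable (ft i) := by
    intro i
    refine Fin.cases ?_ ?_ i
    · simpa [ft] using measurable_const
    · intro j; simpa [ft] using hf j
  refine le_antisymm ?_ ?_
  · -- weak duality
    apply sSup_le
    rintro y ⟨μ, hφμ, hftμ, hmom, rfl⟩
    apply le_sInf
    rintro y' ⟨a, ha, rfl⟩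
    rw [EReal.coe_le_coe_iff]
    have hint : Integrable (fun x => ∑ i, a i * ft i x) μ :=
      integrable_finset_sum _ (fun i _ => (hftμ i).const_mul _)
    calc ∫ x, φ x ∂μ ≤ ∫ x, ∑ i, a i * ft i x ∂μ := integral_mono hφμ hint ha
      _ = ∑ i, a i * qt i := by
          rw [integral_finset_sum _ (fun i _ => (hftμ i).const_mul _)]
          exact Finset.sum_congr rfl fun i _ => by
            rw [integral_const_mul, hmom i]
  · -- strong duality
    by_contra hcon
    push_neg at hcon
    obtain ⟨c, hc1, hc2⟩ := EReal.exists_between_coe_real hcon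
    refine absurd (lt_of_le_of_lt (?_ : _ ≤ ((c : ℝ) : EReal)) hc2) (lt_irrefl _)
    -- (qt, c) is not in the cone
    have hM : ((qt, c) : (Fin (k + 1) → ℝ) × ℝ) ∉ MSet ft φ := by
      intro hz
      obtain ⟨μ, hφμ, hftμ, hmom, hcle⟩ := MSet.exists_measure hft hφ hz
      have hmem : ((∫ x, φ x ∂μ : ℝ) : EReal) ∈
          { y : EReal | ∃ μ : Measure Ω, Integrable φ μ ∧
            (∀ i, Integrable (ft i) μ) ∧ (∀ i, (∫ x, ft i x ∂μ) = qt i) ∧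
            y = ((∫ x, φ x ∂μ : ℝ) : EReal) } := ⟨μ, hφμ, hftμ, hmom, rfl⟩
      have := le_sSup hmem
      have hle : ((c : ℝ) : EReal) ≤ ((∫ x, φ x ∂μ : ℝ) : EReal) :=
        EReal.coe_le_coe_iff.mpr hcle
      exact absurd (lt_of_le_of_lt (hle.trans this) hc1) (lt_irrefl _)
    obtain ⟨g, hg0, hgsep⟩ := weak_sep (MSet.convex ft φ) hM
    set a : Fin (k + 1) → ℝ := fun i => g (Pi.single i 1, 0) with haa
    set b : ℝ := g (0, 1) with hbb
    have hrepr : ∀ (v : Fin (k + 1) → ℝ) (w : ℝ), g (v, w) = ∑ i, v i * a i + w * b :=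
      fun v w => clm_repr g v w
    have hqc : g (qt, c) ≤ 0 := by
      have := hgsep 0 (MSet.zero_mem ft φ)
      rwa [map_zero] at this
    have hge0 : ∀ z ∈ MSet ft φ, 0 ≤ g z := by
      intro z hz
      by_contra hneg
      push_neg at hneg
      have htpos : 0 < (g (qt, c) - 1) / g z := div_pos_of_neg_of_neg (by linarith) hneg
      have := hgsep _ (MSet.smul_mem ft φ htpos.le hz)
      rw [_root_.map_smul, smul_eq_mul, div_mul_cancel₀ _ (ne_of_lt hneg)] at this
      linarith
    have hb : b ≤ 0 := by
      have := hge0 _ (MSet.down_mem ft φ (zero_le_one (α := ℝ)))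
      rw [show (((0 : Fin (k+1) → ℝ), (-1 : ℝ))) = ((0 : Fin (k+1) → ℝ), (-1 : ℝ)) from rfl,
        hrepr 0 (-1)] at this
      simp at this
      linarith
    have hgen : ∀ x, 0 ≤ ∑ i, ft i x * a i + φ x * b := by
      intro x
      have := hge0 _ (MSet.gen_mem ft φ x)
      rwa [hrepr] at this
    have hqcr : ∑ i, qt i * a i + c * b ≤ 0 := by rwa [hrepr] at hqc
    rcases lt_or_eq_of_le hb with hblt | hbeq
    · -- b < 0 : dual feasible point with value ≤ c
      set a' : Fin (k + 1) → ℝ := fun i => a i / (-b) with ha'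
      have hbpos : 0 < -b := by linarith
      have hfeas : ∀ x, φ x ≤ ∑ i, a' i * ft i x := by
        intro x
        have h := hgen x
        have hsum : ∑ i, a' i * ft i x = (∑ i, ft i x * a i) / (-b) := by
          rw [Finset.sum_div]
          refine Finset.sum_congr rfl fun i _ => ?_
          simp only [ha']
          rw [div_mul_eq_mul_div, mul_comm (a i) (ft i x)]
        rw [hsum, le_div_iff₀ hbpos]
        nlinarith
      have hval : ∑ i, a' i * qt i ≤ c := by
        have hsum : ∑ i, a' i * qt i = (∑ i, qt i * a i) / (-b) := by
          rw [Finset.sum_div]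
          refine Finset.sum_congr rfl fun i _ => ?_
          simp only [ha']
          rw [div_mul_eq_mul_div, mul_comm (a i) (qt i)]
        rw [hsum, div_le_iff₀ hbpos]
        nlinarith
      refine le_trans (sInf_le ⟨a', hfeas, rfl⟩) ?_
      exact EReal.coe_le_coe_iff.mpr hval
    · -- b = 0 : contradiction with interiority
      exfalso
      have hbz : b = 0 := hbeq
      have hane : ∃ i, a i ≠ 0 := by
        by_contra h
        push_neg at h
        apply hg0
        refine ContinuousLinearMap.ext fun z => ?_
        obtain ⟨v, w⟩ := z
        rw [hrepr v w]
        simp [h, hbz]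
      have hapos : 0 < ∑ i, a i * a i := by
        obtain ⟨i₀, hi₀⟩ := hane
        have : ∀ i ∈ Finset.univ, 0 ≤ a i * a i := fun i _ => mul_self_nonneg _
        exact Finset.sum_pos' this ⟨i₀, Finset.mem_univ i₀, mul_self_pos.mpr hi₀⟩
      -- get a ball around qt inside Qf
      rw [mem_interior_iff_mem_nhds, Metric.mem_nhds_iff] at hq
      obtain ⟨ε, hε, hball⟩ := hq
      set δ : ℝ := ε / (2 * (‖a‖ + 1)) with hδ
      have hnorm_pos : 0 < ‖a‖ + 1 := by positivity
      have hδpos : 0 < δ := by positivity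
      have hmemball : qt - δ • a ∈ Metric.ball qt ε := by
        rw [Metric.mem_ball, dist_eq_norm]
        have : qt - δ • a - qt = -(δ • a) := by abel
        rw [this, norm_neg, norm_smul, Real.norm_eq_abs, abs_of_pos hδpos]
        calc δ * ‖a‖ ≤ δ * (‖a‖ + 1) := by nlinarith
          _ = ε / 2 := by rw [hδ]; field_simp
          _ < ε := by linarith
      obtain ⟨μ, hftμ, hmom⟩ := hball hmemball
      -- 0 ≤ ∑ i, a i * (qt i - δ * a i)
      have hint : ∀ i, Integrable (fun x => ft i x * a i) μ :=
        fun i => (hftμ i).mul_const _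
      have hnn : 0 ≤ ∫ x, ∑ i, ft i x * a i ∂μ := by
        apply integral_nonneg
        intro x
        have := hgen x
        rw [hbz] at this
        simpa using this
      have heq : ∫ x, ∑ i, ft i x * a i ∂μ = ∑ i, (qt i - δ * a i) * a i := by
        rw [integral_finset_sum _ (fun i _ => hint i)]
        refine Finset.sum_congr rfl fun i _ => ?_
        rw [integral_mul_const, hmom i]
        simp [Pi.sub_apply, Pi.smul_apply, smul_eq_mul]
      rw [heq] at hnn
      have hexp : ∑ i, (qt i - δ * a i) * a i
          = ∑ i, qt i * a i - δ * ∑ i, a i * a i := by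
        rw [Finset.mul_sum, ← Finset.sum_sub_distrib]
        exact Finset.sum_congr rfl fun i _ => by ring
      rw [hexp] at hnn
      rw [hbz] at hqcr
      simp only [mul_zero, add_zero] at hqcr
      nlinarith
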